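/- Let α: F → M be a derivation and let γ: F → M ⊗_ℤ M be the unique map with γ(g_m) = 0 for all generators g_m and γ(uv) = γ(u) + u·γ(v) + α(u) ⊗ u·α(v). Suppose λ and μ are two of the generators and ρ(λμλ⁻¹μ⁻¹) = 1 in π (as holds for the longitude and meridian of a knot group, whose commutator is the peripheral torus relator). Writing h_λ := α(λ) and h_μ := α(μ), one has γ(λμλ⁻¹μ⁻¹) = h_λ⊗λh_μ + μ·(h_λ⊗h_λ) + h_μ⊗h_μ + μ·(h_λ⊗μ⁻¹h_μ) − h_λ⊗μh_λ − h_λ⊗h_μ − λ·(h_μ⊗λ⁻¹μh_λ) − λ·(h_μ⊗λ⁻¹h_μ), where · denotes the diagonal action of F on M ⊗_ℤ M. -/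

import Mathlib

open scoped TensorProduct

/-- The action of an element `u` of the free group `F` on a left
`ℤ[π]`-module `M`, via a homomorphism `ρ : F → π`, as a `ℤ`-linear map. -/
noncomputable def stmt5.actM {a : ℕ} {π : Type*} [Group π]
    (ρ : FreeGroup (Fin a) →* π) (M : Type*) [AddCommGroup M]
    [Module (MonoidAlgebra ℤ π) M] (u : FreeGroup (Fin a)) : M →ₗ[ℤ] M :=
  (DistribMulAction.toAddMonoidHom M
    ((MonoidAlgebra.of ℤ π (ρ u)) : MonoidAlgebra ℤ π)).toIntLinearMap

/-- The diagonal action of `u ∈ F` on `M ⊗_ℤ M`: `u·(x⊗y) = ux⊗uy`. -/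
noncomputable def stmt5.actT {a : ℕ} {π : Type*} [Group π]
    (ρ : FreeGroup (Fin a) →* π) (M : Type*) [AddCommGroup M]
    [Module (MonoidAlgebra ℤ π) M] (u : FreeGroup (Fin a)) :
    M ⊗[ℤ] M →ₗ[ℤ] M ⊗[ℤ] M :=
  TensorProduct.map (stmt5.actM ρ M u) (stmt5.actM ρ M u)

namespace stmt5

variable {a : ℕ} {π : Type*} [Group π] (ρ : FreeGroup (Fin a) →* π)
  (M : Type*) [AddCommGroup M] [Module (MonoidAlgebra ℤ π) M]

lemma actM_apply (u : FreeGroup (Fin a)) (x : M) :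
    actM ρ M u x = ((MonoidAlgebra.of ℤ π (ρ u)) : MonoidAlgebra ℤ π) • x := rfl

lemma actM_mul (u v : FreeGroup (Fin a)) (x : M) :
    actM ρ M (u * v) x = actM ρ M u (actM ρ M v x) := by
  simp only [actM_apply, map_mul, mul_smul]

lemma actM_one (x : M) : actM ρ M 1 x = x := by
  simp only [actM_apply, map_one, one_smul]

lemma actM_congr {u v : FreeGroup (Fin a)} (h : ρ u = ρ v) (x : M) :
    actM ρ M u x = actM ρ M v x := by
  simp [actM_apply, h]

lemma actT_tmul (u : FreeGroup (Fin a)) (x y : M) :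
    actT ρ M u (x ⊗ₜ[ℤ] y) = (actM ρ M u x) ⊗ₜ[ℤ] (actM ρ M u y) := rfl

lemma actM_eq (u v : FreeGroup (Fin a)) :
    actM ρ M (u * v) = (actM ρ M u).comp (actM ρ M v) :=
  LinearMap.ext fun x => actM_mul ρ M u v x

lemma actT_mul (u v : FreeGroup (Fin a)) (z : M ⊗[ℤ] M) :
    actT ρ M (u * v) z = actT ρ M u (actT ρ M v z) := by
  have : actT ρ M (u * v) = (actT ρ M u).comp (actT ρ M v) := by
    rw [actT, actT, actT, actM_eq, TensorProduct.map_comp]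
    rfl
  rw [this]; rfl

lemma actT_one (z : M ⊗[ℤ] M) : actT ρ M 1 z = z := by
  have : actT ρ M (1 : FreeGroup (Fin a)) = TensorProduct.map LinearMap.id LinearMap.id := by
    rw [actT]
    congr 1 <;> exact LinearMap.ext fun x => actM_one ρ M x
  rw [this, TensorProduct.map_id]; rfl

lemma actT_congr {u v : FreeGroup (Fin a)} (h : ρ u = ρ v) (z : M ⊗[ℤ] M) :
    actT ρ M u z = actT ρ M v z := by
  have hm : actM ρ M u = actM ρ M v := LinearMap.ext fun x => actM_congr ρ M h x
  rw [actT, actT, hm]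

end stmt5

/-- Let `α : F → M` be a derivation and `γ : F → M ⊗_ℤ M` the
unique map with `γ(g_m) = 0` for all generators and
`γ(uv) = γ(u) + u·γ(v) + α(u) ⊗ u·α(v)`.  Suppose `λ, μ` are two of the
generators with `ρ(λμλ⁻¹μ⁻¹) = 1` in `π` (as for the longitude and meridian
of a knot group).  Writing `h_λ := α(λ)`, `h_μ := α(μ)`, one has
`γ(λμλ⁻¹μ⁻¹) = h_λ⊗λh_μ + μ·(h_λ⊗h_λ) + h_μ⊗h_μ + μ·(h_λ⊗μ⁻¹h_μ)
  - h_λ⊗μh_λ - h_λ⊗h_μ - λ·(h_μ⊗λ⁻¹μh_λ) - λ·(h_μ⊗λ⁻¹h_μ)`,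
where `·` denotes the diagonal action of `F` on `M ⊗_ℤ M`. -/
theorem stmt_5 (a : ℕ) (π : Type*) [Group π] (M : Type*) [AddCommGroup M]
    [Module (MonoidAlgebra ℤ π) M] (ρ : FreeGroup (Fin a) →* π)
    (α : FreeGroup (Fin a) → M)
    (hα : ∀ u v : FreeGroup (Fin a), α (u * v) = α u + stmt5.actM ρ M u (α v))
    (γ : FreeGroup (Fin a) → M ⊗[ℤ] M)
    (hγ0 : ∀ m : Fin a, γ (FreeGroup.of m) = 0)
    (hγ : ∀ u v : FreeGroup (Fin a),
      γ (u * v) = γ u + stmt5.actT ρ M u (γ v)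
        + (α u) ⊗ₜ[ℤ] (stmt5.actM ρ M u (α v)))
    (il im : Fin a)
    (hrel : ρ (FreeGroup.of il * FreeGroup.of im * (FreeGroup.of il)⁻¹
      * (FreeGroup.of im)⁻¹) = 1) :
    γ (FreeGroup.of il * FreeGroup.of im * (FreeGroup.of il)⁻¹
        * (FreeGroup.of im)⁻¹)
      = (α (FreeGroup.of il))
          ⊗ₜ[ℤ] (stmt5.actM ρ M (FreeGroup.of il) (α (FreeGroup.of im)))
        + stmt5.actT ρ M (FreeGroup.of im)
            ((α (FreeGroup.of il)) ⊗ₜ[ℤ] (α (FreeGroup.of il)))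
        + (α (FreeGroup.of im)) ⊗ₜ[ℤ] (α (FreeGroup.of im))
        + stmt5.actT ρ M (FreeGroup.of im)
            ((α (FreeGroup.of il)) ⊗ₜ[ℤ]
              (stmt5.actM ρ M (FreeGroup.of im)⁻¹ (α (FreeGroup.of im))))
        - (α (FreeGroup.of il))
            ⊗ₜ[ℤ] (stmt5.actM ρ M (FreeGroup.of im) (α (FreeGroup.of il)))
        - (α (FreeGroup.of il)) ⊗ₜ[ℤ] (α (FreeGroup.of im))
        - stmt5.actT ρ M (FreeGroup.of il)
            ((α (FreeGroup.of im)) ⊗ₜ[ℤ]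
              (stmt5.actM ρ M ((FreeGroup.of il)⁻¹ * FreeGroup.of im)
                (α (FreeGroup.of il))))
        - stmt5.actT ρ M (FreeGroup.of il)
            ((α (FreeGroup.of im)) ⊗ₜ[ℤ]
              (stmt5.actM ρ M (FreeGroup.of il)⁻¹ (α (FreeGroup.of im)))) := by
  classical
  set L := FreeGroup.of il with hLdef
  set Mu := FreeGroup.of im with hMudef
  set A := α L with hAdef
  set B := α Mu with hBdef
  have hγL : γ L = 0 := hγ0 il
  have hγMu : γ Mu = 0 := hγ0 im
  -- basic facts about derivations
  have hα1 : α (1 : FreeGroup (Fin a)) = 0 := by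
    have h := hα 1 1
    rw [one_mul, stmt5.actM_one] at h
    exact (left_eq_add.mp h)
  have hγ1 : γ (1 : FreeGroup (Fin a)) = 0 := by
    have h := hγ 1 1
    rw [one_mul, hα1, stmt5.actT_one, TensorProduct.zero_tmul, add_zero] at h
    exact (left_eq_add.mp h)
  have hαinv : ∀ u : FreeGroup (Fin a), α u⁻¹ = - stmt5.actM ρ M u⁻¹ (α u) := by
    intro u
    have h := hα u u⁻¹
    rw [mul_inv_cancel, hα1] at h
    have h2 : stmt5.actM ρ M u (α u⁻¹) = - α u := by
      rw [eq_neg_iff_add_eq_zero, add_comm]; exact h.symm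
    have h3 : stmt5.actM ρ M u⁻¹ (stmt5.actM ρ M u (α u⁻¹)) = α u⁻¹ := by
      rw [← stmt5.actM_mul, inv_mul_cancel, stmt5.actM_one]
    rw [← h3, h2, map_neg]
  have hγinv : ∀ u : FreeGroup (Fin a),
      γ u⁻¹ = stmt5.actT ρ M u⁻¹ ((α u) ⊗ₜ[ℤ] (α u) - γ u) := by
    intro u
    have h := hγ u u⁻¹
    rw [mul_inv_cancel, hγ1, hαinv u, map_neg, ← stmt5.actM_mul, mul_inv_cancel,
      stmt5.actM_one, TensorProduct.tmul_neg] at h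
    have h2 : γ u + stmt5.actT ρ M u (γ u⁻¹) = (α u) ⊗ₜ[ℤ] (α u) :=
      add_neg_eq_zero.mp h.symm
    have h3 : stmt5.actT ρ M u (γ u⁻¹) = (α u) ⊗ₜ[ℤ] (α u) - γ u :=
      eq_sub_of_add_eq' h2
    have h4 : stmt5.actT ρ M u⁻¹ (stmt5.actT ρ M u (γ u⁻¹)) = γ u⁻¹ := by
      rw [← stmt5.actT_mul, inv_mul_cancel, stmt5.actT_one]
    rw [← h4, h3]
  -- consequences of the relation
  have hr1 : ρ (L * Mu * L⁻¹) = ρ Mu := by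
    rw [map_mul, map_inv] at hrel
    exact mul_inv_eq_one.mp hrel
  have hr0 : ρ (L * Mu * L⁻¹ * Mu⁻¹) = ρ (1 : FreeGroup (Fin a)) := by
    rw [hrel, map_one]
  -- step 1 : γ (L * Mu)
  have e1 : γ (L * Mu) = A ⊗ₜ[ℤ] (stmt5.actM ρ M L B) := by
    rw [hγ L Mu, hγL, hγMu, map_zero, zero_add, zero_add]
  -- α of the products
  have eαLMu : α (L * Mu) = A + stmt5.actM ρ M L B := hα L Mu
  have eαw : α (L * Mu * L⁻¹) = A + stmt5.actM ρ M L B - stmt5.actM ρ M Mu A := by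
    rw [hα (L * Mu) L⁻¹, eαLMu, hαinv L, map_neg, ← stmt5.actM_mul,
      stmt5.actM_congr ρ M hr1]
    abel
  -- step 2 : γ (L * Mu * L⁻¹)
  have e2 : γ (L * Mu * L⁻¹)
      = A ⊗ₜ[ℤ] (stmt5.actM ρ M L B)
        + stmt5.actT ρ M Mu (A ⊗ₜ[ℤ] A)
        - A ⊗ₜ[ℤ] (stmt5.actM ρ M Mu A)
        - (stmt5.actM ρ M L B) ⊗ₜ[ℤ] (stmt5.actM ρ M Mu A) := by
    rw [hγ (L * Mu) L⁻¹, e1, hγinv L, hγL, sub_zero, ← stmt5.actT_mul,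
      stmt5.actT_congr ρ M hr1, eαLMu, hαinv L, map_neg, ← stmt5.actM_mul,
      stmt5.actM_congr ρ M hr1, TensorProduct.tmul_neg, TensorProduct.add_tmul]
    abel
  -- step 3 : the full word
  rw [hγ (L * Mu * L⁻¹) Mu⁻¹, e2, hγinv Mu, hγMu, sub_zero, ← stmt5.actT_mul,
    stmt5.actT_congr ρ M hr0, stmt5.actT_one, eαw, hαinv Mu, map_neg,
    ← stmt5.actM_mul, stmt5.actM_congr ρ M hr0, stmt5.actM_one,
    TensorProduct.tmul_neg]
  simp only [TensorProduct.neg_tmul, TensorProduct.sub_tmul, TensorProduct.add_tmul,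
    ← hBdef]
  -- simplify the right-hand side
  rw [stmt5.actT_tmul ρ M Mu A (stmt5.actM ρ M Mu⁻¹ B), ← stmt5.actM_mul,
    mul_inv_cancel, stmt5.actM_one,
    stmt5.actT_tmul ρ M L B (stmt5.actM ρ M (L⁻¹ * Mu) A), ← stmt5.actM_mul,
    mul_inv_cancel_left,
    stmt5.actT_tmul ρ M L B (stmt5.actM ρ M L⁻¹ B), ← stmt5.actM_mul,
    mul_inv_cancel, stmt5.actM_one]
  abel
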